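/- Let 𝕂 be ℝ or ℂ, and let p < q be prime numbers. Let v be a 𝕂-analytic function defined on an open neighborhood N of 0 in 𝕂² all of whose partial derivatives of order < 2q vanish at 0. Then the germ at 0 of F_{p,q} + v is irreducible in the local ring of 𝕂-analytic function germs at 0; concretely: (F_{p,q} + v)(0) = 0, F_{p,q} + v does not vanish identically on any neighborhood of 0, and whenever g, h are 𝕂-analytic functions on an open neighborhood W ⊆ N of 0 with g(w)·h(w) = F_{p,q}(w) + v(w) for all w ∈ W, then g(0) ≠ 0 or h(0) ≠ 0. (Lemma 'Kirreducible'.) -/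

import Mathlib

noncomputable section

open Filter
open scoped ENNReal

/-- `ℝ^n` with the Euclidean norm. -/
abbrev En (n : ℕ) : Type := EuclideanSpace ℝ (Fin n)

/-- Evaluation of a real polynomial in `n` variables at a point of `ℝ^n`. -/
def pEval {n : ℕ} (P : MvPolynomial (Fin n) ℝ) (x : En n) : ℝ :=
  MvPolynomial.eval (fun i => x i) P

/-- `f` is regular on `A ⊆ ℝ^n`: at every point `a ∈ A` there are polynomials `φ, ψ`
with `ψ a ≠ 0` and `f = φ/ψ` on `A` off the zero set of `ψ`. -/
def IsRegularOn {n : ℕ} (A : Set (En n)) (f : En n → ℝ) : Prop :=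
  ∀ a ∈ A, ∃ φ ψ : MvPolynomial (Fin n) ℝ, pEval ψ a ≠ 0 ∧
    ∀ x ∈ A, pEval ψ x ≠ 0 → f x = pEval φ x / pEval ψ x

/-- An algebraic set in `ℝ^n`: the common zero set of a family of polynomials. -/
def IsAlgebraicSet {n : ℕ} (X : Set (En n)) : Prop :=
  ∃ S : Set (MvPolynomial (Fin n) ℝ), X = {x | ∀ P ∈ S, pEval P x = 0}

/-- A function on a subset `A` is real analytic if near every point of `A` it agrees
with a genuinely real analytic function defined on an open neighborhood. -/
def AnalyticOnSubset {EE : Type*} [NormedAddCommGroup EE] [NormedSpace ℝ EE]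
    (A : Set EE) (f : EE → ℝ) : Prop :=
  ∀ a ∈ A, ∃ U : Set EE, IsOpen U ∧ a ∈ U ∧
    ∃ G : EE → ℝ, AnalyticOnNhd ℝ G U ∧ ∀ x ∈ A ∩ U, G x = f x

/-- The ideal of polynomials vanishing on `X`. -/
def polyVanishingIdeal {n : ℕ} (X : Set (En n)) : Ideal (MvPolynomial (Fin n) ℝ) where
  carrier := {P | ∀ x ∈ X, pEval P x = 0}
  add_mem' := by
    intro a b ha hb x hx
    have h1 : pEval a x = 0 := ha x hx
    have h2 : pEval b x = 0 := hb x hx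
    simp only [pEval, map_add] at h1 h2 ⊢
    rw [h1, h2, add_zero]
  zero_mem' := by
    intro x hx
    simp [pEval]
  smul_mem' := by
    intro c P hP x hx
    have h1 : pEval P x = 0 := hP x hx
    simp only [pEval, smul_eq_mul, map_mul] at h1 ⊢
    rw [h1, mul_zero]

/-- A local presentation of `X` as a nonsingular set of dimension `d` at `a`:
polynomials `P i` vanishing on `X`, cutting out `X` near `a`, with linearly
independent gradients at `a`. -/
def IsLocalPresentation {n : ℕ} (X : Set (En n)) (d : ℕ) (a : En n)
    (Ω : Set (En n)) (P : Fin (n - d) → MvPolynomial (Fin n) ℝ) : Prop :=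
  IsOpen Ω ∧ a ∈ Ω ∧ (∀ i, ∀ x ∈ X, pEval (P i) x = 0) ∧
  X ∩ Ω = {x | x ∈ Ω ∧ ∀ i, pEval (P i) x = 0} ∧
  LinearIndependent ℝ (fun i => (fun j => pEval (MvPolynomial.pderiv j (P i)) a : Fin n → ℝ))

/-- `X` is nonsingular of dimension `d` at the point `a`. -/
def NonsingularAt {n : ℕ} (X : Set (En n)) (d : ℕ) (a : En n) : Prop :=
  ∃ Ω P, IsLocalPresentation X d a Ω P

/-- `X` is nonsingular of dimension `d`. -/
def IsNonsingularOfDim {n : ℕ} (X : Set (En n)) (d : ℕ) : Prop :=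
  ∀ a ∈ X, NonsingularAt X d a

/-- `Z` is faithful at `b`: every real analytic function vanishing on `Z` near `b` is,
near `b`, a finite combination `Σ ψᵢ · Pᵢ` with `Pᵢ` polynomials vanishing on `Z`
and `ψᵢ` real analytic. -/
def FaithfulAt {n : ℕ} (Z : Set (En n)) (b : En n) : Prop :=
  ∀ U : Set (En n), IsOpen U → b ∈ U →
    ∀ g : En n → ℝ, AnalyticOnNhd ℝ g U → (∀ x ∈ Z ∩ U, g x = 0) →
      ∃ V : Set (En n), IsOpen V ∧ b ∈ V ∧ V ⊆ U ∧
        ∃ (s : ℕ) (ψ : Fin s → En n → ℝ) (P : Fin s → MvPolynomial (Fin n) ℝ),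
          (∀ i, AnalyticOnNhd ℝ (ψ i) V) ∧ (∀ i, ∀ x ∈ Z, pEval (P i) x = 0) ∧
          ∀ x ∈ V, g x = ∑ i, ψ i x * pEval (P i) x

/-- `Z` is faithful if it is faithful at each of its points. -/
def IsFaithful {n : ℕ} (Z : Set (En n)) : Prop := ∀ b ∈ Z, FaithfulAt Z b

/-- The model curve `D_{p,q} = {x^p - y^q = 0, z₁ = ⋯ = z_{m-2} = 0} ⊆ ℝ^m`. -/
def Dpq (m p q : ℕ) : Set (En m) :=
  {y | (∀ h1 : 1 < m, (y ⟨0, Nat.lt_of_succ_lt h1⟩) ^ p - (y ⟨1, h1⟩) ^ q = 0) ∧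
       ∀ i : Fin m, 2 ≤ (i : ℕ) → y i = 0}

/-- `C` is a `(p,q)`-curve in `X` (with `dim X = m`) with singular point `a`. -/
def IsPqCurve {n : ℕ} (X : Set (En n)) (m p q : ℕ) (C : Set (En n)) (a : En n) : Prop :=
  IsAlgebraicSet C ∧ C ⊆ X ∧ a ∈ C ∧ ¬ NonsingularAt C 1 a ∧
  (∀ b ∈ C, b ≠ a → NonsingularAt C 1 b) ∧ FaithfulAt C a ∧
  ∃ (O : Set (En n)) (W : Set (En m)) (σ : En n → En m) (τ : En m → En n),
    IsOpen O ∧ a ∈ O ∧ IsOpen W ∧ (0 : En m) ∈ W ∧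
    AnalyticOnNhd ℝ σ O ∧ AnalyticOnNhd ℝ τ W ∧ σ a = 0 ∧
    Set.BijOn σ (X ∩ O) W ∧ (∀ x ∈ X ∩ O, τ (σ x) = x) ∧
    σ '' (C ∩ O) = Dpq m p q ∩ W

/-- A Euclidean `d`-sphere in `ℝ^n`. -/
def IsEuclideanSphere {n : ℕ} (d : ℕ) (S : Set (En n)) : Prop :=
  ∃ (Q : AffineSubspace ℝ (En n)) (x₀ : En n) (r : ℝ),
    Module.finrank ℝ Q.direction = d + 1 ∧ x₀ ∈ Q ∧ 0 < r ∧
    S = {x | ‖x - x₀‖ = r} ∩ (Q : Set (En n))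

/-- `F_{p,q}(x,y) = x^p - y^q + x^{2q} + y^{2q}`. -/
def Fpq (p q : ℕ) (w : ℝ × ℝ) : ℝ := w.1 ^ p - w.2 ^ q + w.1 ^ (2 * q) + w.2 ^ (2 * q)

/-- `C_{p,q}`, the zero set of `F_{p,q}` in `ℝ²`. -/
def Cpq (p q : ℕ) : Set (ℝ × ℝ) := {w | Fpq p q w = 0}

/-- `H_{p,q}(x,y) = x^p - y^q`. -/
def Hpq (p q : ℕ) (w : ℝ × ℝ) : ℝ := w.1 ^ p - w.2 ^ q

/-- `E_{p,q}`, the zero set of `H_{p,q}` in `ℝ²`. -/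
def Epq (p q : ℕ) : Set (ℝ × ℝ) := {w | Hpq p q w = 0}

/-- The collection `𝒢^k(ℝ^n)`: curves affinely equivalent (inside an affine 2-plane)
to a translate of `C_{p,q}` with `p < q` primes, `pk < q`. -/
def InGk {n : ℕ} (k : ℕ) (C : Set (En n)) : Prop :=
  ∃ (Q : AffineSubspace ℝ (En n)) (φ : En n →ᵃ[ℝ] ℝ × ℝ) (p q : ℕ) (ab : ℝ × ℝ),
    Module.finrank ℝ Q.direction = 2 ∧ C ⊆ (Q : Set (En n)) ∧
    Set.BijOn φ (Q : Set (En n)) Set.univ ∧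
    p.Prime ∧ q.Prime ∧ p < q ∧ p * k < q ∧
    φ '' C = (fun z => ab + z) '' Cpq p q

/-- The collection `𝓗^k(ℝ^n)`: curves affinely equivalent (inside an affine 2-plane)
to a translate of `E_{p,q}` with `p < q` primes, `pk < q`. -/
def InHk {n : ℕ} (k : ℕ) (C : Set (En n)) : Prop :=
  ∃ (Q : AffineSubspace ℝ (En n)) (φ : En n →ᵃ[ℝ] ℝ × ℝ) (p q : ℕ) (ab : ℝ × ℝ),
    Module.finrank ℝ Q.direction = 2 ∧ C ⊆ (Q : Set (En n)) ∧
    Set.BijOn φ (Q : Set (En n)) Set.univ ∧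
    p.Prime ∧ q.Prime ∧ p < q ∧ p * k < q ∧
    φ '' C = (fun z => ab + z) '' Epq p q

/-- The unit circle in `ℝ²`. -/
def unitCircle2 : Set (ℝ × ℝ) := {w | w.1 ^ 2 + w.2 ^ 2 = 1}

/-- The unit 2-sphere in `ℝ³`. -/
def unitSphere2 : Set (En 3) := {u | ‖u‖ = 1}

/-- `F_{p,q}` as a polynomial in two variables. -/
def FpqPoly (p q : ℕ) : MvPolynomial (Fin 2) ℝ :=
  MvPolynomial.X 0 ^ p - MvPolynomial.X 1 ^ q +
    MvPolynomial.X 0 ^ (2 * q) + MvPolynomial.X 1 ^ (2 * q)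

/-- The curve `C_{p,q}` as a subset of the Euclidean plane `ℝ²`. -/
def CpqE (p q : ℕ) : Set (En 2) := {x | pEval (FpqPoly p q) x = 0}


/-- `F_{p,q}` over an arbitrary field `𝕂`. -/
def FpqK (𝕂 : Type*) [Field 𝕂] (p q : ℕ) (w : 𝕂 × 𝕂) : 𝕂 :=
  w.1 ^ p - w.2 ^ q + w.1 ^ (2 * q) + w.2 ^ (2 * q)



namespace KirredAux
open Filter Topology
variable {𝕂 : Type} [RCLike 𝕂]

def FpqK' (𝕂 : Type) [Field 𝕂] (p q : ℕ) (w : 𝕂 × 𝕂) : 𝕂 :=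
  w.1 ^ p - w.2 ^ q + w.1 ^ (2 * q) + w.2 ^ (2 * q)

/-- `f` has order of vanishing exactly `n` at `0`. -/
def Ord (f : 𝕂 → 𝕂) (n : ℕ) : Prop :=
  ∃ u : 𝕂 → 𝕂, AnalyticAt 𝕂 u 0 ∧ u 0 ≠ 0 ∧ ∀ᶠ t in 𝓝 (0:𝕂), f t = t ^ n * u t

/-- `f` has order of vanishing at least `n` at `0`. -/
def OrdGE (f : 𝕂 → 𝕂) (n : ℕ) : Prop :=
  ∃ u : 𝕂 → 𝕂, AnalyticAt 𝕂 u 0 ∧ ∀ᶠ t in 𝓝 (0:𝕂), f t = t ^ n * u t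

lemma Ord.unique {f : 𝕂 → 𝕂} {m n : ℕ} (hm : Ord f m) (hn : Ord f n) : m = n := by
  apply AnalyticAt.unique_eventuallyEq_pow_smul_nonzero (f := f) (z₀ := (0:𝕂))
  · obtain ⟨u, h1, h2, h3⟩ := hm
    exact ⟨u, h1, h2, by filter_upwards [h3] with t ht; simpa [smul_eq_mul] using ht⟩
  · obtain ⟨u, h1, h2, h3⟩ := hn
    exact ⟨u, h1, h2, by filter_upwards [h3] with t ht; simpa [smul_eq_mul] using ht⟩

lemma Ord.mul {f g : 𝕂 → 𝕂} {m n : ℕ} (hm : Ord f m) (hn : Ord g n) :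
    Ord (fun t => f t * g t) (m + n) := by
  obtain ⟨u, h1, h2, h3⟩ := hm
  obtain ⟨w, k1, k2, k3⟩ := hn
  refine ⟨fun t => u t * w t, h1.mul k1, mul_ne_zero h2 k2, ?_⟩
  filter_upwards [h3, k3] with t ht kt
  rw [ht, kt, pow_add]; ring

lemma Ord.congr {f g : 𝕂 → 𝕂} {n : ℕ} (h : Ord f n) (hfg : ∀ᶠ t in 𝓝 (0:𝕂), f t = g t) :
    Ord g n := by
  obtain ⟨u, h1, h2, h3⟩ := h
  exact ⟨u, h1, h2, by filter_upwards [h3, hfg] with t ht hfgt; rw [← hfgt, ht]⟩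

lemma exists_ord {f : 𝕂 → 𝕂} (hf : AnalyticAt 𝕂 f 0) (h : ¬ ∀ᶠ t in 𝓝 (0:𝕂), f t = 0) :
    ∃ n, Ord f n := by
  obtain ⟨n, u, h1, h2, h3⟩ := hf.exists_eventuallyEq_pow_smul_nonzero_iff.mpr h
  exact ⟨n, u, h1, h2, by filter_upwards [h3] with t ht; simpa [smul_eq_mul] using ht⟩

lemma Ord.not_eventually_zero {f : 𝕂 → 𝕂} {n : ℕ} (h : Ord f n) :
    ¬ ∀ᶠ t in 𝓝 (0:𝕂), f t = 0 := by
  obtain ⟨u, h1, h2, h3⟩ := h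
  intro hz
  have hu : ∀ᶠ t in 𝓝 (0:𝕂), u t ≠ 0 := h1.continuousAt.eventually_ne h2
  have : ∀ᶠ t in 𝓝[≠] (0:𝕂), False := by
    filter_upwards [eventually_nhdsWithin_of_eventually_nhds (h3.and (hz.and hu)),
      self_mem_nhdsWithin] with t ⟨ht, hzt, hut⟩ ht0
    have : t ^ n * u t = 0 := by rw [← ht, hzt]
    rcases mul_eq_zero.mp this with h | h
    · exact ht0 (pow_eq_zero_iff' .. |>.mp h).1
    · exact hut h
  exact (this.exists).elim (fun _ h => h)


lemma deriv_of_rep : ∀ (n : ℕ) (f u : 𝕂 → 𝕂), AnalyticAt 𝕂 u 0 →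
    (∀ᶠ t in 𝓝 (0:𝕂), f t = t ^ n * u t) →
    (∀ i < n, iteratedDeriv i f 0 = 0) ∧ iteratedDeriv n f 0 = (n.factorial : 𝕂) * u 0 := by
  intro n
  induction n with
  | zero =>
    intro f u hu hf
    refine ⟨fun i hi => absurd hi (Nat.not_lt_zero i), ?_⟩
    simpa using hf.self_of_nhds
  | succ n ih =>
    intro f u hu hf
    -- the derivative representation
    have hu' : AnalyticAt 𝕂 (deriv u) 0 := by
      obtain ⟨U, hUmem, hU⟩ := hu.exists_mem_nhds_analyticOnNhd
      exact hU.deriv 0 (mem_of_mem_nhds hUmem)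
    set u1 : 𝕂 → 𝕂 := fun t => ((n:𝕂) + 1) * u t + t * deriv u t with hu1def
    have hu1 : AnalyticAt 𝕂 u1 0 :=
      ((analyticAt_const.mul hu).add (analyticAt_id.mul hu'))
    have hdf : ∀ᶠ t in 𝓝 (0:𝕂), deriv f t = t ^ n * u1 t := by
      have h1 : deriv f =ᶠ[𝓝 (0:𝕂)] deriv (fun t => t ^ (n+1) * u t) :=
        Filter.EventuallyEq.deriv hf
      have h2 : ∀ᶠ t in 𝓝 (0:𝕂), AnalyticAt 𝕂 u t := hu.eventually_analyticAt
      filter_upwards [h1, h2] with t h1t h2t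
      rw [h1t, deriv_fun_mul (by fun_prop) h2t.differentiableAt]
      rw [deriv_pow_field]
      push_cast
      ring
    have := ih (deriv f) u1 hu1 hdf
    constructor
    · intro i hi
      match i with
      | 0 =>
        simp only [iteratedDeriv_zero]
        have := hf.self_of_nhds
        simpa using this
      | (j+1) =>
        rw [iteratedDeriv_succ', this.1 j (by omega)]
    · rw [iteratedDeriv_succ', this.2]
      simp only [hu1def]
      push_cast [Nat.factorial_succ]
      ring

lemma Ord.ordGE_of_le {f : 𝕂 → 𝕂} {m n : ℕ} (h : Ord f m) (hle : n ≤ m) : OrdGE f n := by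
  obtain ⟨u, h1, h2, h3⟩ := h
  refine ⟨fun t => t ^ (m - n) * u t, (analyticAt_id.pow _).mul h1, ?_⟩
  filter_upwards [h3] with t ht
  rw [ht, ← mul_assoc, ← pow_add]
  congr 2
  omega

lemma OrdGE.mono {f : 𝕂 → 𝕂} {m n : ℕ} (h : OrdGE f m) (hle : n ≤ m) : OrdGE f n := by
  obtain ⟨u, h1, h3⟩ := h
  refine ⟨fun t => t ^ (m - n) * u t, (analyticAt_id.pow _).mul h1, ?_⟩
  filter_upwards [h3] with t ht
  rw [ht, ← mul_assoc, ← pow_add]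
  congr 2
  omega

lemma OrdGE.iteratedDeriv_zero {f : 𝕂 → 𝕂} {n : ℕ} (h : OrdGE f n) :
    ∀ i < n, iteratedDeriv i f 0 = 0 := by
  obtain ⟨u, h1, h3⟩ := h
  exact (deriv_of_rep n f u h1 h3).1

lemma Ord.iteratedDeriv_ne_zero {f : 𝕂 → 𝕂} {n : ℕ} (h : Ord f n) :
    iteratedDeriv n f 0 ≠ 0 := by
  obtain ⟨u, h1, h2, h3⟩ := h
  rw [(deriv_of_rep n f u h1 h3).2]
  exact mul_ne_zero (Nat.cast_ne_zero.mpr n.factorial_ne_zero) h2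

lemma ordGE_of_iteratedDeriv {f : 𝕂 → 𝕂} {n : ℕ} (hf : AnalyticAt 𝕂 f 0)
    (h : ∀ i < n, iteratedDeriv i f 0 = 0) : OrdGE f n := by
  by_cases hz : ∀ᶠ t in 𝓝 (0:𝕂), f t = 0
  · exact ⟨0, analyticAt_const, by filter_upwards [hz] with t ht; simp [ht]⟩
  · obtain ⟨k, hk⟩ := exists_ord hf hz
    rcases le_or_gt n k with hle | hlt
    · exact hk.ordGE_of_le hle
    · exact absurd (h k hlt) hk.iteratedDeriv_ne_zero

lemma ord_of_iteratedDeriv {f : 𝕂 → 𝕂} {n : ℕ} (hf : AnalyticAt 𝕂 f 0)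
    (h : ∀ i < n, iteratedDeriv i f 0 = 0) (hn : iteratedDeriv n f 0 ≠ 0) : Ord f n := by
  obtain ⟨u, h1, h3⟩ := ordGE_of_iteratedDeriv hf h
  refine ⟨u, h1, ?_, h3⟩
  intro hu0
  apply hn
  rw [(deriv_of_rep n f u h1 h3).2, hu0, mul_zero]

lemma ordGE_of_isBigO {f : 𝕂 → 𝕂} {m : ℕ} (hf : AnalyticAt 𝕂 f 0)
    (h : f =O[𝓝 (0:𝕂)] fun t => ‖t‖ ^ m) : OrdGE f m := by
  by_cases hz : ∀ᶠ t in 𝓝 (0:𝕂), f t = 0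
  · exact ⟨0, analyticAt_const, by filter_upwards [hz] with t ht; simp [ht]⟩
  obtain ⟨k, hk⟩ := exists_ord hf hz
  rcases le_or_gt m k with hle | hlt
  · exact hk.ordGE_of_le hle
  exfalso
  obtain ⟨u, h1, h2, h3⟩ := hk
  obtain ⟨C, hC⟩ := h.isBigOWith
  rw [Asymptotics.isBigOWith_iff] at hC
  -- on the punctured neighborhood, ‖u t‖ ≤ C * ‖t‖^(m-k)
  have key : ∀ᶠ t in 𝓝[≠] (0:𝕂), ‖u t‖ ≤ C * ‖t‖ ^ (m - k) := by
    filter_upwards [eventually_nhdsWithin_of_eventually_nhds (h3.and hC),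
      self_mem_nhdsWithin] with t ⟨ht, hCt⟩ ht0
    have htn : (0:ℝ) < ‖t‖ := norm_pos_iff.mpr ht0
    have htne : (0:ℝ) < ‖t‖ ^ k := pow_pos htn k
    rw [ht] at hCt
    have e1 : ‖t ^ k * u t‖ = ‖t‖ ^ k * ‖u t‖ := by rw [norm_mul, norm_pow]
    have e3 : ‖t‖ ^ m = ‖t‖ ^ k * ‖t‖ ^ (m - k) := by rw [← pow_add]; congr 1; omega
    have e2 : C * ‖‖t‖ ^ m‖ = ‖t‖ ^ k * (C * ‖t‖ ^ (m - k)) := by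
      rw [norm_pow, norm_norm, e3]; ring
    rw [e1, e2] at hCt
    exact le_of_mul_le_mul_left hCt htne
  -- limits
  have hlim1 : Tendsto (fun t => ‖u t‖) (𝓝[≠] (0:𝕂)) (𝓝 ‖u 0‖) :=
    (h1.continuousAt.norm.tendsto).mono_left nhdsWithin_le_nhds
  have hlim2 : Tendsto (fun t : 𝕂 => C * ‖t‖ ^ (m - k)) (𝓝[≠] (0:𝕂)) (𝓝 0) := by
    have : Tendsto (fun t : 𝕂 => C * ‖t‖ ^ (m - k)) (𝓝 (0:𝕂)) (𝓝 (C * ‖(0:𝕂)‖ ^ (m-k))) :=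
      (continuous_const.mul (continuous_norm.pow _)).tendsto 0
    simpa [norm_zero, zero_pow (by omega : m - k ≠ 0)] using this.mono_left nhdsWithin_le_nhds
  have : ‖u 0‖ ≤ 0 := le_of_tendsto_of_tendsto hlim1 hlim2 key
  exact h2 (norm_le_zero_iff.mp this)

lemma Ord.comp_pow {f : 𝕂 → 𝕂} {n : ℕ} (h : Ord f n) {k : ℕ} (hk : k ≠ 0) :
    Ord (fun t => f (t ^ k)) (k * n) := by
  obtain ⟨u, h1, h2, h3⟩ := h
  have htend : Tendsto (fun t : 𝕂 => t ^ k) (𝓝 0) (𝓝 0) := by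
    have := (continuous_pow k (M := 𝕂)).tendsto 0
    simpa [zero_pow hk] using this
  have hid : AnalyticAt 𝕂 (fun t : 𝕂 => t ^ k) 0 := analyticAt_id.pow k
  have hcomp : AnalyticAt 𝕂 (fun t => u (t ^ k)) 0 := by
    apply AnalyticAt.comp (g := u) (f := fun t : 𝕂 => t ^ k) (x := 0) ?_ hid
    show AnalyticAt 𝕂 u ((0:𝕂) ^ k)
    rw [zero_pow hk]; exact h1
  refine ⟨fun t => u (t ^ k), hcomp, ?_, ?_⟩
  · show u ((0:𝕂) ^ k) ≠ 0
    rw [zero_pow hk]; exact h2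
  filter_upwards [htend.eventually h3] with t ht
  rw [ht, pow_mul]


/-- Iterated partial derivative in the last variable. -/
noncomputable def tderivs (F : 𝕂 × 𝕂 × 𝕂 → 𝕂) : ℕ → (𝕂 × 𝕂 × 𝕂 → 𝕂)
  | 0 => F
  | (i+1) => fun z => fderiv 𝕂 (tderivs F i) z (0, 0, 1)

lemma tderivs_analytic {F : 𝕂 × 𝕂 × 𝕂 → 𝕂} {Ω : Set (𝕂 × 𝕂 × 𝕂)}
    (hF : AnalyticOnNhd 𝕂 F Ω) :
    ∀ i, AnalyticOnNhd 𝕂 (tderivs F i) Ω := by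
  intro i
  induction i with
  | zero => exact hF
  | succ i ih =>
    intro z hz
    exact ((ContinuousLinearMap.apply 𝕂 𝕂 ((0,0,1) : 𝕂 × 𝕂 × 𝕂)).analyticAt _).comp
      (ih.fderiv z hz)

lemma tderivs_section {F : 𝕂 × 𝕂 × 𝕂 → 𝕂} {Ω : Set (𝕂 × 𝕂 × 𝕂)} (hΩ : IsOpen Ω)
    (hF : AnalyticOnNhd 𝕂 F Ω) (s c : 𝕂) :
    ∀ i, ∀ t : 𝕂, (s, c, t) ∈ Ω →
      iteratedDeriv i (fun τ => F (s, c, τ)) t = tderivs F i (s, c, t) := by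
  intro i
  induction i with
  | zero => intro t _; rw [iteratedDeriv_zero]; rfl
  | succ i ih =>
    intro t ht
    rw [iteratedDeriv_succ]
    have hev : (fun τ => iteratedDeriv i (fun τ' => F (s, c, τ')) τ)
        =ᶠ[𝓝 t] (fun τ => tderivs F i (s, c, τ)) := by
      have hopen : IsOpen {τ : 𝕂 | (s, c, τ) ∈ Ω} :=
        hΩ.preimage (by continuity : Continuous fun τ : 𝕂 => ((s, c, τ) : 𝕂 × 𝕂 × 𝕂))
      filter_upwards [hopen.mem_nhds ht] with τ hτ
      exact ih τ hτ
    rw [hev.deriv_eq]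
    -- chain rule
    have hJ : HasFDerivAt (fun τ : 𝕂 => ((s, c, τ) : 𝕂 × 𝕂 × 𝕂))
        (((0 : 𝕂 →L[𝕂] 𝕂).prod ((0 : 𝕂 →L[𝕂] 𝕂).prod (ContinuousLinearMap.id 𝕂 𝕂)))) t :=
      HasFDerivAt.prodMk (hasFDerivAt_const s t) (HasFDerivAt.prodMk (hasFDerivAt_const c t) (hasFDerivAt_id t))
    have hFi : HasFDerivAt (tderivs F i) (fderiv 𝕂 (tderivs F i) (s, c, t)) (s, c, t) :=
      ((tderivs_analytic hF i) _ ht).differentiableAt.hasFDerivAt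
    have hcomp := hFi.comp t hJ
    have hd : HasDerivAt (fun τ => tderivs F i (s, c, τ))
        ((fderiv 𝕂 (tderivs F i) (s, c, t)) (((0:𝕂), (0:𝕂), (1:𝕂)))) t := by
      have := hcomp.hasDerivAt
      exact this
    rw [hd.deriv]
    rfl

lemma v_isBigO {v : 𝕂 × 𝕂 → 𝕂} (hv : AnalyticAt 𝕂 v 0) {M : ℕ}
    (hord : ∀ i < M, iteratedFDeriv 𝕂 i v 0 = 0) :
    v =O[𝓝 (0 : 𝕂 × 𝕂)] fun z => ‖z‖ ^ M := by
  obtain ⟨P, hP⟩ := hv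
  have h1 := hP.isBigO_sub_partialSum_pow M
  have hcoeff : ∀ k, k < M → ∀ y : 𝕂 × 𝕂, P k (fun _ => y) = 0 := by
    intro k hk y
    obtain ⟨r, hball⟩ := hP
    have h2 := hball.factorial_smul y k
    rw [hord k hk] at h2
    simp only [ContinuousMultilinearMap.zero_apply] at h2
    have : ((k.factorial : 𝕂)) * P k (fun _ => y) = 0 := by
      rw [← nsmul_eq_mul]; exact h2
    exact (mul_eq_zero.mp this).resolve_left
      (Nat.cast_ne_zero.mpr k.factorial_ne_zero)
  have hps : ∀ y : 𝕂 × 𝕂, P.partialSum M y = 0 := by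
    intro y
    unfold FormalMultilinearSeries.partialSum
    exact Finset.sum_eq_zero fun k hk => hcoeff k (Finset.mem_range.mp hk) y
  have : (fun y : 𝕂 × 𝕂 => v (0 + y) - P.partialSum M y) = v := by
    funext y; rw [hps y, zero_add, sub_zero]
  rwa [this] at h1

lemma comp_curve_isBigO {v : 𝕂 × 𝕂 → 𝕂} {M : ℕ}
    (hbig : v =O[𝓝 (0 : 𝕂 × 𝕂)] fun z => ‖z‖ ^ M) {e : 𝕂 → 𝕂 × 𝕂}
    (he : Continuous e) (he0 : e 0 = 0) {K : ℝ} {r : ℕ}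
    (hK : ∀ᶠ t in 𝓝 (0:𝕂), ‖e t‖ ≤ K * ‖t‖ ^ r) (hK0 : 0 ≤ K) :
    (fun t => v (e t)) =O[𝓝 (0:𝕂)] fun t => ‖t‖ ^ (r * M) := by
  have htend : Tendsto e (𝓝 0) (𝓝 0) := by
    have := he.tendsto 0; rwa [he0] at this
  have h2 : (fun t => v (e t)) =O[𝓝 (0:𝕂)] fun t => ‖e t‖ ^ M := hbig.comp_tendsto htend
  refine h2.trans ?_
  rw [Asymptotics.isBigO_iff]
  refine ⟨K ^ M, ?_⟩
  filter_upwards [hK] with t ht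
  have h3 : ‖e t‖ ^ M ≤ (K * ‖t‖ ^ r) ^ M := pow_le_pow_left₀ (norm_nonneg _) ht M
  calc ‖‖e t‖ ^ M‖ = ‖e t‖ ^ M := by rw [norm_pow, norm_norm]
    _ ≤ (K * ‖t‖ ^ r) ^ M := h3
    _ = K ^ M * ‖t‖ ^ (r * M) := by rw [mul_pow, ← pow_mul]
    _ ≤ K ^ M * ‖‖t‖ ^ (r * M)‖ := by rw [norm_pow, norm_norm]

lemma curve_comp_analyticAt {g : 𝕂 × 𝕂 → 𝕂} (hg : AnalyticAt 𝕂 g 0) {p q : ℕ}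
    (hp : p ≠ 0) (hq : q ≠ 0) (s c : 𝕂) :
    AnalyticAt 𝕂 (fun t => g (s * t ^ q, c * t ^ p)) 0 := by
  apply AnalyticAt.comp (g := g) (f := fun t : 𝕂 => (s * t ^ q, c * t ^ p)) (x := 0) ?_ ?_
  · show AnalyticAt 𝕂 g (s * (0:𝕂) ^ q, c * (0:𝕂) ^ p)
    rw [zero_pow hq, zero_pow hp, mul_zero, mul_zero]
    exact hg
  · exact (analyticAt_const.mul (analyticAt_id.pow q)).prod
      (analyticAt_const.mul (analyticAt_id.pow p))

lemma inl_comp_analyticAt {g : 𝕂 × 𝕂 → 𝕂} (hg : AnalyticAt 𝕂 g 0) :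
    AnalyticAt 𝕂 (fun t => g (t, 0)) 0 := by
  apply AnalyticAt.comp (g := g) (f := fun t : 𝕂 => ((t, 0) : 𝕂 × 𝕂)) (x := 0) ?_ ?_
  · exact hg
  · exact analyticAt_id.prod analyticAt_const

lemma inr_comp_analyticAt {g : 𝕂 × 𝕂 → 𝕂} (hg : AnalyticAt 𝕂 g 0) :
    AnalyticAt 𝕂 (fun t => g (0, t)) 0 := by
  apply AnalyticAt.comp (g := g) (f := fun t : 𝕂 => ((0, t) : 𝕂 × 𝕂)) (x := 0) ?_ ?_
  · exact hg
  · exact analyticAt_const.prod analyticAt_id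

section ABC
variable {v : 𝕂 × 𝕂 → 𝕂} {p q : ℕ}

/-- Order of `G` along the x-axis is `p`. -/
lemma ordA (hv0 : AnalyticAt 𝕂 v 0)
    (hvO : v =O[𝓝 (0 : 𝕂 × 𝕂)] fun z => ‖z‖ ^ (2 * q))
    (hp1 : 1 ≤ p) (hpq : p < q) :
    Ord (fun t => FpqK' 𝕂 p q (t, 0) + v (t, 0)) p := by
  have hq1 : 1 ≤ q := hp1.trans hpq.le
  have hO : (fun t : 𝕂 => v (t, 0)) =O[𝓝 (0:𝕂)] fun t => ‖t‖ ^ (1 * (2 * q)) := by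
    apply comp_curve_isBigO hvO (by continuity) (by simp) (K := 1) ?_ zero_le_one
    filter_upwards with t
    simp [Prod.norm_def]
  have hvx : OrdGE (fun t : 𝕂 => v (t, 0)) (p + 1) :=
    (ordGE_of_isBigO (inl_comp_analyticAt hv0) hO).mono (by omega)
  obtain ⟨w, hw_an, hw_eq⟩ := hvx
  refine ⟨fun t => 1 + t ^ (2 * q - p) + t * w t, ?_, ?_, ?_⟩
  · exact ((analyticAt_const.add (analyticAt_id.pow _)).add (analyticAt_id.mul hw_an))
  · have h1 : 2 * q - p ≠ 0 := by omega
    simp [zero_pow h1]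
  · filter_upwards [hw_eq] with t ht
    simp only [FpqK']
    rw [ht]
    have hz : (0:𝕂) ^ q = 0 := zero_pow (by omega)
    have hz2 : (0:𝕂) ^ (2*q) = 0 := zero_pow (by omega)
    simp only [hz, hz2]
    have epow : t ^ (2 * q) = t ^ p * t ^ (2 * q - p) := by
      rw [← pow_add]; congr 1; omega
    rw [epow, pow_succ]
    ring

/-- Order of `G` along the y-axis is `q`. -/
lemma ordB (hv0 : AnalyticAt 𝕂 v 0)
    (hvO : v =O[𝓝 (0 : 𝕂 × 𝕂)] fun z => ‖z‖ ^ (2 * q))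
    (hp1 : 1 ≤ p) (hpq : p < q) :
    Ord (fun t => FpqK' 𝕂 p q (0, t) + v (0, t)) q := by
  have hq1 : 1 ≤ q := hp1.trans hpq.le
  have hO : (fun t : 𝕂 => v (0, t)) =O[𝓝 (0:𝕂)] fun t => ‖t‖ ^ (1 * (2 * q)) := by
    apply comp_curve_isBigO hvO (by continuity) (by simp) (K := 1) ?_ zero_le_one
    filter_upwards with t
    simp [Prod.norm_def]
  have hvx : OrdGE (fun t : 𝕂 => v (0, t)) (q + 1) :=
    (ordGE_of_isBigO (inr_comp_analyticAt hv0) hO).mono (by omega)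
  obtain ⟨w, hw_an, hw_eq⟩ := hvx
  refine ⟨fun t => -1 + t ^ q + t * w t, ?_, ?_, ?_⟩
  · exact ((analyticAt_const.add (analyticAt_id.pow _)).add (analyticAt_id.mul hw_an))
  · simp [zero_pow (by omega : q ≠ 0)]
  · filter_upwards [hw_eq] with t ht
    simp only [FpqK']
    rw [ht]
    have hz : (0:𝕂) ^ p = 0 := zero_pow (by omega)
    have hz2 : (0:𝕂) ^ (2*q) = 0 := zero_pow (by omega)
    simp only [hz, hz2]
    have epow : t ^ (2 * q) = t ^ q * t ^ q := by
      rw [← pow_add]; congr 1; omega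
    rw [epow, pow_succ]
    ring

/-- Order of `G` along the weighted curve `t ↦ (s t^q, c t^p)` is `pq` when `s^p ≠ c^q`. -/
lemma ordC (hv0 : AnalyticAt 𝕂 v 0)
    (hvO : v =O[𝓝 (0 : 𝕂 × 𝕂)] fun z => ‖z‖ ^ (2 * q))
    (hp1 : 1 ≤ p) (hpq : p < q) (s c : 𝕂) (hsc : s ^ p - c ^ q ≠ 0) :
    Ord (fun t => FpqK' 𝕂 p q (s * t ^ q, c * t ^ p) + v (s * t ^ q, c * t ^ p)) (p * q) := by
  have hq1 : 1 ≤ q := hp1.trans hpq.le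
  have hqne : q ≠ 0 := by omega
  have hpne : p ≠ 0 := by omega
  -- the big-O bound along the curve
  have hO : (fun t : 𝕂 => v (s * t ^ q, c * t ^ p)) =O[𝓝 (0:𝕂)]
      fun t => ‖t‖ ^ (p * (2 * q)) := by
    apply comp_curve_isBigO hvO (by continuity) (by simp [zero_pow hpne, zero_pow hqne])
      (K := max ‖s‖ ‖c‖ + 1) ?_ (by positivity)
    have h1 : ∀ᶠ t : 𝕂 in 𝓝 0, ‖t‖ ≤ 1 := by
      filter_upwards [Metric.closedBall_mem_nhds (0:𝕂) one_pos] with t ht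
      simpa [dist_zero_right] using ht
    filter_upwards [h1] with t ht
    rw [Prod.norm_def]
    have hb : (0:ℝ) ≤ ‖t‖ := norm_nonneg t
    have h2 : ‖s * t ^ q‖ ≤ ‖s‖ * ‖t‖ ^ p := by
      rw [norm_mul, norm_pow]
      exact mul_le_mul_of_nonneg_left (pow_le_pow_of_le_one hb ht hpq.le) (norm_nonneg s)
    have h3 : ‖c * t ^ p‖ ≤ ‖c‖ * ‖t‖ ^ p := by rw [norm_mul, norm_pow]
    have h4 : ‖s‖ ≤ max ‖s‖ ‖c‖ + 1 := by
      have := le_max_left ‖s‖ ‖c‖; linarith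
    have h5 : ‖c‖ ≤ max ‖s‖ ‖c‖ + 1 := by
      have := le_max_right ‖s‖ ‖c‖; linarith
    have hppos : (0:ℝ) ≤ ‖t‖ ^ p := by positivity
    apply max_le
    · exact h2.trans (mul_le_mul_of_nonneg_right h4 hppos)
    · exact h3.trans (mul_le_mul_of_nonneg_right h5 hppos)
  have hvcurve : OrdGE (fun t : 𝕂 => v (s * t ^ q, c * t ^ p)) (p * q + 1) := by
    apply (ordGE_of_isBigO (curve_comp_analyticAt hv0 hpne hqne s c) hO).mono
    nlinarith [hp1, hq1]
  obtain ⟨w, hw_an, hw_eq⟩ := hvcurve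
  set E : ℕ := 2 * q * q - p * q with hE
  have hEpos : E ≠ 0 := by
    have : p * q < 2 * q * q := by nlinarith
    omega
  have hEeq : q * (2 * q) = p * q + E := by
    have h1 : p * q ≤ 2 * q * q := by nlinarith
    have h2 : q * (2 * q) = 2 * q * q := by ring
    omega
  have hPeq : p * (2 * q) = p * q + p * q := by ring
  refine ⟨fun t => (s ^ p - c ^ q) + s ^ (2*q) * t ^ E + c ^ (2*q) * t ^ (p*q) + t * w t,
    ?_, ?_, ?_⟩
  · exact (((analyticAt_const.add (analyticAt_const.mul (analyticAt_id.pow _))).add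
      (analyticAt_const.mul (analyticAt_id.pow _))).add (analyticAt_id.mul hw_an))
  · have hpq1 : p * q ≠ 0 := by positivity
    simp [zero_pow hEpos, zero_pow hpq1, hsc]
  · filter_upwards [hw_eq] with t ht
    simp only [FpqK']
    rw [ht]
    have e1 : (s * t ^ q) ^ p = s ^ p * t ^ (q * p) := by rw [mul_pow, ← pow_mul]
    have e2 : (c * t ^ p) ^ q = c ^ q * t ^ (p * q) := by rw [mul_pow, ← pow_mul]
    have e3 : (s * t ^ q) ^ (2*q) = s ^ (2*q) * t ^ (q * (2*q)) := by rw [mul_pow, ← pow_mul]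
    have e4 : (c * t ^ p) ^ (2*q) = c ^ (2*q) * t ^ (p * (2*q)) := by rw [mul_pow, ← pow_mul]
    have e5 : t ^ (q * (2*q)) = t ^ (p*q) * t ^ E := by rw [← pow_add, ← hEeq]
    have e6 : t ^ (p * (2*q)) = t ^ (p*q) * t ^ (p*q) := by rw [← pow_add, ← hPeq]
    have e7 : t ^ (q * p) = t ^ (p * q) := by rw [mul_comm]
    rw [e1, e2, e3, e4, e5, e6, e7, pow_succ]
    ring

end ABC

lemma exists_ne_zero_mul {f g : 𝕂 × 𝕂 → 𝕂}
    (hf : AnalyticOnNhd 𝕂 f Set.univ) (hg : AnalyticOnNhd 𝕂 g Set.univ)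
    (hf0 : ∃ z, f z ≠ 0) (hg0 : ∃ z, g z ≠ 0) : ∃ z, f z * g z ≠ 0 := by
  by_contra hcon
  push_neg at hcon
  obtain ⟨z₁, hz₁⟩ := hf0
  obtain ⟨z₂, hz₂⟩ := hg0
  have hev : g =ᶠ[𝓝 z₁] 0 := by
    filter_upwards [(hf z₁ (Set.mem_univ _)).continuousAt.eventually_ne hz₁] with z hz
    have := hcon z
    rcases mul_eq_zero.mp this with h | h
    · exact absurd h hz
    · exact h
  have := hg.eqOn_zero_of_preconnected_of_eventuallyEq_zero isPreconnected_univ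
    (Set.mem_univ z₁) hev
  exact hz₂ (this (Set.mem_univ z₂))

lemma key_arith : ∀ A B x y : ℕ, x ≤ A → y ≤ B → x + y = A + B → x = A ∧ y = B := by
  intros; omega

theorem lem_Kirreducible' {p q : ℕ} (hp : p.Prime) (hq : q.Prime)
    (hpq : p < q) (N : Set (𝕂 × 𝕂)) (hN : IsOpen N) (h0 : (0 : 𝕂 × 𝕂) ∈ N)
    (v : 𝕂 × 𝕂 → 𝕂) (hv : AnalyticOnNhd 𝕂 v N)
    (hord : ∀ i < 2 * q, iteratedFDeriv 𝕂 i v 0 = 0) :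
    (FpqK' 𝕂 p q 0 + v 0 = 0) ∧
    (∀ U : Set (𝕂 × 𝕂), IsOpen U → (0 : 𝕂 × 𝕂) ∈ U →
      ∃ w ∈ U ∩ N, FpqK' 𝕂 p q w + v w ≠ 0) ∧
    (∀ W : Set (𝕂 × 𝕂), IsOpen W → (0 : 𝕂 × 𝕂) ∈ W → W ⊆ N →
      ∀ g h : 𝕂 × 𝕂 → 𝕂, AnalyticOnNhd 𝕂 g W → AnalyticOnNhd 𝕂 h W →
        (∀ w ∈ W, g w * h w = FpqK' 𝕂 p q w + v w) →
        g 0 ≠ 0 ∨ h 0 ≠ 0) := by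
  classical
  have hp2 : 2 ≤ p := hp.two_le
  have hq2 : 2 ≤ q := hq.two_le
  have hp1 : 1 ≤ p := by omega
  have hpne : p ≠ 0 := by omega
  have hqne : q ≠ 0 := by omega
  have h2qne : 2 * q ≠ 0 := by omega
  have hv0 : AnalyticAt 𝕂 v 0 := hv 0 h0
  have hvO : v =O[𝓝 (0 : 𝕂 × 𝕂)] fun z => ‖z‖ ^ (2 * q) := v_isBigO hv0 hord
  have hv00 : v 0 = 0 := by
    have h00 := hord 0 (by omega)
    have h01 : (iteratedFDeriv 𝕂 0 v 0) (fun _ => 0) = v 0 := iteratedFDeriv_zero_apply _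
    rw [h00] at h01
    simpa using h01.symm
  refine ⟨?_, ?_, ?_⟩
  · -- value at 0
    rw [hv00, add_zero]
    simp [FpqK', zero_pow hpne, zero_pow hqne, zero_pow h2qne]
  · -- not identically zero
    intro U hU hU0
    have hordA := ordA (p := p) (q := q) hv0 hvO hp1 hpq
    have hfreq : ∃ᶠ t in 𝓝 (0:𝕂), FpqK' 𝕂 p q (t, 0) + v (t, 0) ≠ 0 := by
      have := hordA.not_eventually_zero
      rwa [Filter.not_eventually] at this
    have hcont : Continuous (fun t : 𝕂 => ((t, (0:𝕂)) : 𝕂 × 𝕂)) := by continuity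
    have hev : ∀ᶠ t in 𝓝 (0:𝕂), ((t, (0:𝕂)) : 𝕂 × 𝕂) ∈ U ∩ N :=
      (hcont.tendsto 0) ((hU.inter hN).mem_nhds ⟨hU0, h0⟩)
    obtain ⟨t, hne, hmem⟩ := (hfreq.and_eventually hev).exists
    exact ⟨(t, 0), hmem, hne⟩
  · -- irreducibility
    intro W hWo hW0 hWN g h hg hh hfact
    by_contra hcon
    push_neg at hcon
    obtain ⟨hg0, hh0⟩ := hcon
    have hgan0 : AnalyticAt 𝕂 g 0 := hg 0 hW0
    have hhan0 : AnalyticAt 𝕂 h 0 := hh 0 hW0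
    -- x-axis orders
    have hcontx : Continuous (fun t : 𝕂 => ((t, (0:𝕂)) : 𝕂 × 𝕂)) := by continuity
    have hevx : ∀ᶠ t in 𝓝 (0:𝕂), ((t, (0:𝕂)) : 𝕂 × 𝕂) ∈ W :=
      (hcontx.tendsto 0) (hWo.mem_nhds hW0)
    have hprodx : ∀ᶠ t in 𝓝 (0:𝕂),
        g (t, 0) * h (t, 0) = FpqK' 𝕂 p q (t, 0) + v (t, 0) := by
      filter_upwards [hevx] with t ht
      exact hfact _ ht
    have hOrdGx : Ord (fun t => FpqK' 𝕂 p q (t, 0) + v (t, 0)) p :=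
      ordA hv0 hvO hp1 hpq
    have hgx_ne : ¬ ∀ᶠ t in 𝓝 (0:𝕂), g (t, 0) = 0 := by
      intro hz
      apply hOrdGx.not_eventually_zero
      filter_upwards [hz, hprodx] with t h1 h2
      rw [← h2, h1, zero_mul]
    have hhx_ne : ¬ ∀ᶠ t in 𝓝 (0:𝕂), h (t, 0) = 0 := by
      intro hz
      apply hOrdGx.not_eventually_zero
      filter_upwards [hz, hprodx] with t h1 h2
      rw [← h2, h1, mul_zero]
    obtain ⟨a₁, ha₁⟩ := exists_ord (inl_comp_analyticAt hgan0) hgx_ne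
    obtain ⟨a₂, ha₂⟩ := exists_ord (inl_comp_analyticAt hhan0) hhx_ne
    have hsum_a : a₁ + a₂ = p := Ord.unique ((ha₁.mul ha₂).congr hprodx) hOrdGx
    have ha₁0 : a₁ ≠ 0 := by
      intro h0a
      obtain ⟨u, hu1, hu2, hu3⟩ := ha₁
      apply hu2
      have hval := hu3.self_of_nhds
      rw [h0a] at hval
      have : g (0, 0) = u 0 := by simpa using hval
      rw [show ((0:𝕂), (0:𝕂)) = (0 : 𝕂 × 𝕂) from rfl, hg0] at this
      exact this.symm
    have ha₂0 : a₂ ≠ 0 := by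
      intro h0a
      obtain ⟨u, hu1, hu2, hu3⟩ := ha₂
      apply hu2
      have hval := hu3.self_of_nhds
      rw [h0a] at hval
      have : h (0, 0) = u 0 := by simpa using hval
      rw [show ((0:𝕂), (0:𝕂)) = (0 : 𝕂 × 𝕂) from rfl, hh0] at this
      exact this.symm
    -- y-axis orders
    have hconty : Continuous (fun t : 𝕂 => (((0:𝕂), t) : 𝕂 × 𝕂)) := by continuity
    have hevy : ∀ᶠ t in 𝓝 (0:𝕂), (((0:𝕂), t) : 𝕂 × 𝕂) ∈ W :=
      (hconty.tendsto 0) (hWo.mem_nhds hW0)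
    have hprody : ∀ᶠ t in 𝓝 (0:𝕂),
        g (0, t) * h (0, t) = FpqK' 𝕂 p q (0, t) + v (0, t) := by
      filter_upwards [hevy] with t ht
      exact hfact _ ht
    have hOrdGy : Ord (fun t => FpqK' 𝕂 p q (0, t) + v (0, t)) q :=
      ordB hv0 hvO hp1 hpq
    have hgy_ne : ¬ ∀ᶠ t in 𝓝 (0:𝕂), g (0, t) = 0 := by
      intro hz
      apply hOrdGy.not_eventually_zero
      filter_upwards [hz, hprody] with t h1 h2
      rw [← h2, h1, zero_mul]
    have hhy_ne : ¬ ∀ᶠ t in 𝓝 (0:𝕂), h (0, t) = 0 := by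
      intro hz
      apply hOrdGy.not_eventually_zero
      filter_upwards [hz, hprody] with t h1 h2
      rw [← h2, h1, mul_zero]
    obtain ⟨b₁, hb₁⟩ := exists_ord (inr_comp_analyticAt hgan0) hgy_ne
    obtain ⟨b₂, hb₂⟩ := exists_ord (inr_comp_analyticAt hhan0) hhy_ne
    have hsum_b : b₁ + b₂ = q := Ord.unique ((hb₁.mul hb₂).congr hprody) hOrdGy
    -- the weighted-curve machinery
    set e3 : 𝕂 × 𝕂 × 𝕂 → 𝕂 × 𝕂 := fun z => (z.1 * z.2.2 ^ q, z.2.1 * z.2.2 ^ p) with he3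
    have he3cont : Continuous e3 := by
      apply Continuous.prodMk
      · exact continuous_fst.mul ((continuous_snd.comp continuous_snd).pow q)
      · exact (continuous_fst.comp continuous_snd).mul
          ((continuous_snd.comp continuous_snd).pow p)
    set Ω : Set (𝕂 × 𝕂 × 𝕂) := e3 ⁻¹' W with hΩdef
    have hΩo : IsOpen Ω := hWo.preimage he3cont
    have hΩmem : ∀ s c : 𝕂, ((s, c, 0) : 𝕂 × 𝕂 × 𝕂) ∈ Ω := by
      intro s c
      show e3 (s, c, 0) ∈ W
      have : e3 (s, c, 0) = 0 := by
        simp only [he3, zero_pow hpne, zero_pow hqne, mul_zero]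
        rfl
      rw [this]
      exact hW0
    have he3an : AnalyticOnNhd 𝕂 e3 Set.univ := by
      intro z _
      have h22 : AnalyticAt 𝕂 (fun z : 𝕂 × 𝕂 × 𝕂 => z.2.2) z :=
        analyticAt_snd.comp analyticAt_snd
      have h21 : AnalyticAt 𝕂 (fun z : 𝕂 × 𝕂 × 𝕂 => z.2.1) z :=
        analyticAt_fst.comp analyticAt_snd
      exact (analyticAt_fst.mul (h22.pow q)).prod (h21.mul (h22.pow p))
    have hFg : AnalyticOnNhd 𝕂 (g ∘ e3) Ω :=
      AnalyticOnNhd.comp hg (fun z _ => he3an z (Set.mem_univ z)) (fun z hz => hz)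
    have hFh : AnalyticOnNhd 𝕂 (h ∘ e3) Ω :=
      AnalyticOnNhd.comp hh (fun z _ => he3an z (Set.mem_univ z)) (fun z hz => hz)
    set dg : ℕ → 𝕂 × 𝕂 → 𝕂 := fun i sc => tderivs (g ∘ e3) i (sc.1, sc.2, 0) with hdgdef
    set dh : ℕ → 𝕂 × 𝕂 → 𝕂 := fun i sc => tderivs (h ∘ e3) i (sc.1, sc.2, 0) with hdhdef
    have link_g : ∀ i (s c : 𝕂),
        iteratedDeriv i (fun t => g (s * t ^ q, c * t ^ p)) 0 = dg i (s, c) := by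
      intro i s c
      exact tderivs_section hΩo hFg s c i 0 (hΩmem s c)
    have link_h : ∀ i (s c : 𝕂),
        iteratedDeriv i (fun t => h (s * t ^ q, c * t ^ p)) 0 = dh i (s, c) := by
      intro i s c
      exact tderivs_section hΩo hFh s c i 0 (hΩmem s c)
    have hdg_an : ∀ i, AnalyticOnNhd 𝕂 (dg i) Set.univ := by
      intro i z _
      apply AnalyticAt.comp (g := tderivs (g ∘ e3) i)
        (f := fun sc : 𝕂 × 𝕂 => ((sc.1, sc.2, (0:𝕂)) : 𝕂 × 𝕂 × 𝕂)) (x := z) ?_ ?_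
      · exact tderivs_analytic hFg i _ (hΩmem z.1 z.2)
      · exact analyticAt_fst.prod (analyticAt_snd.prod analyticAt_const)
    have hdh_an : ∀ i, AnalyticOnNhd 𝕂 (dh i) Set.univ := by
      intro i z _
      apply AnalyticAt.comp (g := tderivs (h ∘ e3) i)
        (f := fun sc : 𝕂 × 𝕂 => ((sc.1, sc.2, (0:𝕂)) : 𝕂 × 𝕂 × 𝕂)) (x := z) ?_ ?_
      · exact tderivs_analytic hFh i _ (hΩmem z.1 z.2)
      · exact analyticAt_fst.prod (analyticAt_snd.prod analyticAt_const)
    -- orders at the special parameter values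
    have hφg10 : Ord (fun t : 𝕂 => g ((1:𝕂) * t ^ q, (0:𝕂) * t ^ p)) (q * a₁) := by
      apply (ha₁.comp_pow hqne).congr
      filter_upwards with t
      norm_num
    have hφg01 : Ord (fun t : 𝕂 => g ((0:𝕂) * t ^ q, (1:𝕂) * t ^ p)) (p * b₁) := by
      apply (hb₁.comp_pow hpne).congr
      filter_upwards with t
      norm_num
    have hφh10 : Ord (fun t : 𝕂 => h ((1:𝕂) * t ^ q, (0:𝕂) * t ^ p)) (q * a₂) := by
      apply (ha₂.comp_pow hqne).congr
      filter_upwards with t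
      norm_num
    have hφh01 : Ord (fun t : 𝕂 => h ((0:𝕂) * t ^ q, (1:𝕂) * t ^ p)) (p * b₂) := by
      apply (hb₂.comp_pow hpne).congr
      filter_upwards with t
      norm_num
    -- least nonvanishing t-derivative
    have hPg : ∃ i, ∃ sc : 𝕂 × 𝕂, dg i sc ≠ 0 :=
      ⟨q * a₁, (1, 0), by rw [← link_g]; exact hφg10.iteratedDeriv_ne_zero⟩
    have hPh : ∃ i, ∃ sc : 𝕂 × 𝕂, dh i sc ≠ 0 :=
      ⟨q * a₂, (1, 0), by rw [← link_h]; exact hφh10.iteratedDeriv_ne_zero⟩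
    set μg := Nat.find hPg with hμgdef
    set μh := Nat.find hPh with hμhdef
    have hψg : ∃ sc : 𝕂 × 𝕂, dg μg sc ≠ 0 := Nat.find_spec hPg
    have hψh : ∃ sc : 𝕂 × 𝕂, dh μh sc ≠ 0 := Nat.find_spec hPh
    have hdg0 : ∀ i < μg, ∀ sc : 𝕂 × 𝕂, dg i sc = 0 := by
      intro i hi sc
      have := Nat.find_min hPg hi
      push_neg at this
      exact this sc
    have hdh0 : ∀ i < μh, ∀ sc : 𝕂 × 𝕂, dh i sc = 0 := by
      intro i hi sc
      have := Nat.find_min hPh hi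
      push_neg at this
      exact this sc
    have hμg1 : μg ≤ q * a₁ :=
      Nat.find_le ⟨(1, 0), by rw [← link_g]; exact hφg10.iteratedDeriv_ne_zero⟩
    have hμg2 : μg ≤ p * b₁ :=
      Nat.find_le ⟨(0, 1), by rw [← link_g]; exact hφg01.iteratedDeriv_ne_zero⟩
    have hμh1 : μh ≤ q * a₂ :=
      Nat.find_le ⟨(1, 0), by rw [← link_h]; exact hφh10.iteratedDeriv_ne_zero⟩
    have hμh2 : μh ≤ p * b₂ :=
      Nat.find_le ⟨(0, 1), by rw [← link_h]; exact hφh01.iteratedDeriv_ne_zero⟩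
    -- pick a good parameter point
    have hpoly_an : AnalyticOnNhd 𝕂 (fun sc : 𝕂 × 𝕂 => sc.1 ^ p - sc.2 ^ q) Set.univ :=
      fun z _ => (analyticAt_fst.pow p).sub (analyticAt_snd.pow q)
    have hpoly_ne : ∃ sc : 𝕂 × 𝕂, sc.1 ^ p - sc.2 ^ q ≠ 0 := by
      refine ⟨(1, 0), ?_⟩
      simp [zero_pow hqne]
    obtain ⟨z, hz⟩ := exists_ne_zero_mul (hdg_an μg)
      (fun w _ => ((hdh_an μh) w (Set.mem_univ w)).mul (hpoly_an w (Set.mem_univ w)))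
      hψg (exists_ne_zero_mul (hdh_an μh) hpoly_an hψh hpoly_ne)
    obtain ⟨hzg, hzh, hzpoly⟩ : dg μg z ≠ 0 ∧ dh μh z ≠ 0 ∧ z.1 ^ p - z.2 ^ q ≠ 0 := by
      rcases mul_ne_zero_iff.mp hz with ⟨h1, h2⟩
      rcases mul_ne_zero_iff.mp h2 with ⟨h3, h4⟩
      exact ⟨h1, h3, h4⟩
    -- exact orders along the good curve
    have hOg : Ord (fun t : 𝕂 => g (z.1 * t ^ q, z.2 * t ^ p)) μg := by
      apply ord_of_iteratedDeriv (curve_comp_analyticAt hgan0 hpne hqne z.1 z.2)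
      · intro i hi
        rw [link_g]
        exact hdg0 i hi (z.1, z.2)
      · rw [link_g]
        simpa using hzg
    have hOh : Ord (fun t : 𝕂 => h (z.1 * t ^ q, z.2 * t ^ p)) μh := by
      apply ord_of_iteratedDeriv (curve_comp_analyticAt hhan0 hpne hqne z.1 z.2)
      · intro i hi
        rw [link_h]
        exact hdh0 i hi (z.1, z.2)
      · rw [link_h]
        simpa using hzh
    have hOG : Ord (fun t : 𝕂 =>
        FpqK' 𝕂 p q (z.1 * t ^ q, z.2 * t ^ p) + v (z.1 * t ^ q, z.2 * t ^ p)) (p * q) :=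
      ordC hv0 hvO hp1 hpq z.1 z.2 hzpoly
    have hcontc : Continuous (fun t : 𝕂 => ((z.1 * t ^ q, z.2 * t ^ p) : 𝕂 × 𝕂)) := by
      apply Continuous.prodMk
      · exact continuous_const.mul (continuous_id.pow q)
      · exact continuous_const.mul (continuous_id.pow p)
    have hevc : ∀ᶠ t in 𝓝 (0:𝕂), ((z.1 * t ^ q, z.2 * t ^ p) : 𝕂 × 𝕂) ∈ W := by
      have h1 := hcontc.tendsto 0
      have h2 : ((z.1 * (0:𝕂) ^ q, z.2 * (0:𝕂) ^ p) : 𝕂 × 𝕂) = 0 := by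
        simp [zero_pow hpne, zero_pow hqne]
      rw [h2] at h1
      exact h1 (hWo.mem_nhds hW0)
    have hprodc : ∀ᶠ t in 𝓝 (0:𝕂),
        g (z.1 * t ^ q, z.2 * t ^ p) * h (z.1 * t ^ q, z.2 * t ^ p) =
          FpqK' 𝕂 p q (z.1 * t ^ q, z.2 * t ^ p) + v (z.1 * t ^ q, z.2 * t ^ p) := by
      filter_upwards [hevc] with t ht
      exact hfact _ ht
    have hμsum : μg + μh = p * q := Ord.unique ((hOg.mul hOh).congr hprodc) hOG
    -- arithmetic endgame
    have hQ : q * a₁ + q * a₂ = p * q := by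
      rw [← Nat.mul_add, hsum_a, mul_comm]
    have hP : p * b₁ + p * b₂ = p * q := by
      rw [← Nat.mul_add, hsum_b]
    have h1 := key_arith (q * a₁) (q * a₂) μg μh hμg1 hμh1 (hμsum.trans hQ.symm)
    have h2 := key_arith (p * b₁) (p * b₂) μg μh hμg2 hμh2 (hμsum.trans hP.symm)
    have heq : q * a₁ = p * b₁ := by rw [← h1.1, ← h2.1]
    have hco : Nat.Coprime p q := (Nat.coprime_primes hp hq).mpr hpq.ne
    have hdvd : p ∣ a₁ * q := by
      rw [mul_comm, heq]
      exact dvd_mul_right p b₁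
    have hdvd2 : p ∣ a₁ := (Nat.Coprime.dvd_of_dvd_mul_right hco) hdvd
    have hge : p ≤ a₁ := Nat.le_of_dvd (Nat.pos_of_ne_zero ha₁0) hdvd2
    omega

end KirredAux

/-- Lemma `Kirreducible`. -/
theorem lem_Kirreducible {𝕂 : Type} [RCLike 𝕂] {p q : ℕ} (hp : p.Prime) (hq : q.Prime)
    (hpq : p < q) (N : Set (𝕂 × 𝕂)) (hN : IsOpen N) (h0 : (0 : 𝕂 × 𝕂) ∈ N)
    (v : 𝕂 × 𝕂 → 𝕂) (hv : AnalyticOnNhd 𝕂 v N)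
    (hord : ∀ i < 2 * q, iteratedFDeriv 𝕂 i v 0 = 0) :
    (FpqK 𝕂 p q 0 + v 0 = 0) ∧
    (∀ U : Set (𝕂 × 𝕂), IsOpen U → (0 : 𝕂 × 𝕂) ∈ U →
      ∃ w ∈ U ∩ N, FpqK 𝕂 p q w + v w ≠ 0) ∧
    (∀ W : Set (𝕂 × 𝕂), IsOpen W → (0 : 𝕂 × 𝕂) ∈ W → W ⊆ N →
      ∀ g h : 𝕂 × 𝕂 → 𝕂, AnalyticOnNhd 𝕂 g W → AnalyticOnNhd 𝕂 h W →
        (∀ w ∈ W, g w * h w = FpqK 𝕂 p q w + v w) →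
        g 0 ≠ 0 ∨ h 0 ≠ 0) := by
  exact KirredAux.lem_Kirreducible' hp hq hpq N hN h0 v hv hord

end
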